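/- arXiv:math/0505437 — 3 statements merged into one kernel-verified Lean document; each statement's English description precedes it below -/
import Mathlib

section
/- For every integer p ≥ 1, the Bernoulli number B_{2p} satisfies B_{2p} = ((-1)^p (2p)!/2) · ( Σ_{l=0}^{p} (-1)^l D_{p-l}/(2l)! + D_p ). -/
/-- `D 0 = 1` and, for `k ≥ 1`, `D k` is the determinant of the `k × k` rational matrix
whose `(i, j)` entry is `1/(2(j-i)+3)!` when `j ≥ i`, `1` when `j = i - 1`,
and `0` when `j < i - 1`. -/
def D : ℕ → ℚ
  | 0 => 1
  | k + 1 =>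
    Matrix.det (fun i j : Fin (k + 1) =>
      if (i : ℕ) ≤ (j : ℕ) then 1 / ((2 * ((j : ℕ) - (i : ℕ)) + 3).factorial : ℚ)
      else if (j : ℕ) + 1 = (i : ℕ) then 1 else 0)

open Finset Matrix

def Cmat (k m : ℕ) : Matrix (Fin k) (Fin k) ℚ :=
  Matrix.of fun i j =>
    if (i : ℕ) = 0 then 1 / ((2 * (j : ℕ) + 2 * m + 3).factorial : ℚ)
    else if (i : ℕ) ≤ (j : ℕ) then 1 / ((2 * ((j : ℕ) - (i : ℕ)) + 3).factorial : ℚ)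
    else if (j : ℕ) + 1 = (i : ℕ) then 1 else 0

lemma Cmat_zero (k : ℕ) : (Cmat (k+1) 0).det = D (k+1) := by
  show _ = Matrix.det _
  congr 1
  ext i j
  simp only [Cmat, Matrix.of_apply]
  split_ifs <;>
    first | rfl | omega | (exact False.elim (by assumption)) | (congr 3 <;> omega)

lemma Cmat_one (m : ℕ) : (Cmat 1 m).det = 1 / (((2 * m + 3).factorial : ℚ)) := by
  rw [Matrix.det_fin_one]
  simp [Cmat]

lemma Cmat_rec (k m : ℕ) : (Cmat (k+2) m).det
    = 1 / (((2 * m + 3).factorial : ℚ)) * (Cmat (k+1) 0).det - (Cmat (k+1) (m+1)).det := by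
  rw [Matrix.det_succ_column_zero]
  rw [Fin.sum_univ_succ, Fin.sum_univ_succ]
  have h0 : ∀ i : Fin k, Cmat (k+2) m i.succ.succ 0 = 0 := by
    intro i
    simp only [Cmat, Matrix.of_apply, Fin.val_succ, Fin.val_zero]
    split_ifs <;> first | rfl | omega | (exact False.elim (by assumption))
  have hz : ∑ i : Fin k,
      (-1:ℚ) ^ ((i.succ.succ : Fin (k+2)) : ℕ) * Cmat (k+2) m i.succ.succ 0 *
        ((Cmat (k+2) m).submatrix (i.succ.succ).succAbove Fin.succ).det = 0 := by
    apply Finset.sum_eq_zero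
    intro i _
    rw [h0 i]; ring
  rw [hz]
  have e1 : ((Cmat (k+2) m).submatrix (0 : Fin (k+2)).succAbove Fin.succ) = Cmat (k+1) 0 := by
    ext i j
    simp only [Matrix.submatrix_apply, Fin.succAbove_zero, Cmat, Matrix.of_apply, Fin.val_succ]
    split_ifs <;>
      first | rfl | omega | (exact False.elim (by assumption)) | (congr 3 <;> omega)
  have e2 : ((Cmat (k+2) m).submatrix ((0 : Fin (k+1)).succ).succAbove Fin.succ)
      = Cmat (k+1) (m+1) := by
    ext i j
    have hv : ((((0 : Fin (k+1)).succ).succAbove i : Fin (k+2)) : ℕ)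
        = if (i : ℕ) = 0 then 0 else (i : ℕ) + 1 := by
      rw [Fin.succAbove]
      split_ifs with h1 h2 h3 <;>
        simp_all [Fin.lt_def, Fin.val_one, Fin.val_succ] <;> omega
    simp only [Matrix.submatrix_apply, Cmat, Matrix.of_apply, Fin.val_succ, hv]
    split_ifs <;>
      first | rfl | omega | (exact False.elim (by assumption)) | (congr 3 <;> omega)
  have v00 : Cmat (k+2) m 0 0 = 1 / (((2 * m + 3).factorial : ℚ)) := by
    simp [Cmat]
  have v10 : Cmat (k+2) m ((0 : Fin (k+1)).succ) 0 = 1 := by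
    simp only [Cmat, Matrix.of_apply, Fin.val_succ, Fin.val_zero]
    norm_num
  rw [e1, e2, v00, v10]
  simp only [Fin.val_zero, Fin.val_succ, pow_zero, pow_one]
  ring

lemma Cmat_formula : ∀ k m : ℕ, (Cmat (k+1) m).det
    = ∑ l ∈ Finset.range (k+1), (-1:ℚ)^l * D (k-l) / ((2*(m+l)+3).factorial : ℚ) := by
  intro k
  induction k with
  | zero => intro m; rw [Cmat_one]; norm_num [D]
  | succ k ih =>
    intro m
    rw [Cmat_rec, Cmat_zero, ih (m+1)]
    have h1 : ∀ l ∈ Finset.range (k+1),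
        (-1:ℚ)^(l+1) * D (k+1-(l+1)) / ((2*(m+(l+1))+3).factorial : ℚ)
        = -((-1:ℚ)^l * D (k-l) / ((2*(m+1+l)+3).factorial : ℚ)) := by
      intro l _
      have : k+1-(l+1) = k-l := by omega
      have h2 : 2*(m+(l+1))+3 = 2*(m+1+l)+3 := by omega
      rw [this, h2, pow_succ]
      ring
    have h2 : (∑ l ∈ Finset.range (k+1+1), (-1:ℚ)^l * D (k+1-l) / ((2*(m+l)+3).factorial : ℚ))
        = -(∑ l ∈ Finset.range (k+1), (-1:ℚ)^l * D (k-l) / ((2*(m+1+l)+3).factorial : ℚ))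
          + D (k+1) / ((2*m+3).factorial : ℚ) := by
      rw [Finset.sum_range_succ', Finset.sum_congr rfl h1, Finset.sum_neg_distrib]
      simp
    rw [h2]; ring

lemma D_rec (k : ℕ) : D (k+1)
    = ∑ l ∈ Finset.range (k+1), (-1:ℚ)^l * D (k-l) / ((2*l+3).factorial : ℚ) := by
  rw [← Cmat_zero, Cmat_formula]
  refine Finset.sum_congr rfl fun l _ => ?_
  norm_num

noncomputable def E (n : ℕ) : ℚ := (-1)^n * D n

lemma E_zero : E 0 = 1 := by simp [E, D]

lemma E_conv (n : ℕ) (hn : 1 ≤ n) :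
    ∑ m ∈ Finset.range (n+1), E m / ((2*(n-m)+1).factorial : ℚ) = 0 := by
  obtain ⟨k, rfl⟩ : ∃ k, n = k + 1 := ⟨n - 1, by omega⟩
  have hre : ∑ m ∈ Finset.range (k+1), E m / ((2*(k+1-m)+1).factorial : ℚ)
      = ∑ l ∈ Finset.range (k+1), E (k-l) / ((2*l+3).factorial : ℚ) := by
    rw [← Finset.sum_range_reflect]
    refine Finset.sum_congr rfl fun l hl => ?_
    rw [Finset.mem_range] at hl
    rw [show k+1-1-l = k-l from by omega,
      show 2*(k+1-(k-l))+1 = 2*l+3 from by omega]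
  have hE : E (k+1) = - ∑ l ∈ Finset.range (k+1), E (k-l) / ((2*l+3).factorial : ℚ) := by
    unfold E
    rw [D_rec, Finset.mul_sum, ← Finset.sum_neg_distrib]
    refine Finset.sum_congr rfl fun l hl => ?_
    rw [Finset.mem_range] at hl
    have h1 : D (k-l) = (-1:ℚ)^(k-l) * E (k-l) := by
      unfold E; rw [← mul_assoc, ← pow_add, ← two_mul, pow_mul]
      norm_num
    have hs : (-1:ℚ)^(k+1) * (-1:ℚ)^l = -(-1:ℚ)^(k-l) := by
      rw [← pow_add, show k+1+l = (k-l) + 2*l + 1 from by omega, pow_add, pow_add, pow_mul]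
      norm_num
    rw [h1]
    linear_combination ((-1:ℚ)^(k-l) * E (k-l) / ((2*l+3).factorial : ℚ)) * hs
  rw [Finset.sum_range_succ, hre, hE]
  simp

lemma sum_split (f : ℕ → ℚ) (n : ℕ) :
    ∑ k ∈ Finset.range (2*n+1), f k
      = ∑ m ∈ Finset.range (n+1), f (2*m) + ∑ m ∈ Finset.range n, f (2*m+1) := by
  induction n with
  | zero => simp
  | succ n ih =>
    have h : 2*(n+1)+1 = (2*n+1)+1+1 := by ring
    rw [h, Finset.sum_range_succ, Finset.sum_range_succ, ih,
      Finset.sum_range_succ (fun m => f (2*m)) (n+1),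
      Finset.sum_range_succ (fun m => f (2*m+1)) n]
    have e1 : 2*n+1 = 2*n+1 := rfl
    have e2 : 2*n+1+1 = 2*(n+1) := by ring
    rw [e2]
    ring

lemma bchoose (n : ℕ) (hn : 1 ≤ n) :
    ∑ m ∈ Finset.range (n+1), ((2*n+1).choose (2*m) : ℚ) * bernoulli (2*m)
      = (2*(n:ℚ)+1)/2 := by
  have h := sum_bernoulli (2*n+1)
  rw [if_neg (by omega)] at h
  rw [sum_split (fun k => ((2*n+1).choose k : ℚ) * bernoulli k) n] at h
  obtain ⟨t, rfl⟩ : ∃ t, n = t + 1 := ⟨n - 1, by omega⟩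
  have hodd : ∑ m ∈ Finset.range (t+1),
      (((2*(t+1)+1).choose (2*m+1) : ℚ) * bernoulli (2*m+1)) = (2*((t:ℚ)+1)+1) * (-1/2) := by
    rw [Finset.sum_range_succ']
    have hz : ∀ m ∈ Finset.range t,
        (((2*(t+1)+1).choose (2*(m+1)+1) : ℚ) * bernoulli (2*(m+1)+1)) = 0 := by
      intro m _
      have hb : bernoulli (2*(m+1)+1) = 0 := by
        rw [bernoulli_eq_bernoulli'_of_ne_one (by omega)]
        exact bernoulli'_eq_zero_of_odd ⟨m+1, by ring⟩ (by omega)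
      rw [hb, mul_zero]
    rw [Finset.sum_congr rfl hz, Finset.sum_const_zero, zero_add]
    norm_num [Nat.choose_one_right]
  rw [hodd] at h
  push_cast
  push_cast at h
  linarith

lemma bsum (n : ℕ) (hn : 1 ≤ n) :
    ∑ m ∈ Finset.range (n+1),
        (bernoulli (2*m) / ((2*m).factorial : ℚ)) / ((2*(n-m)+1).factorial : ℚ)
      = 1/(2*((2*n).factorial : ℚ)) := by
  have key : ∀ m ∈ Finset.range (n+1),
      (bernoulli (2*m) / ((2*m).factorial : ℚ)) / ((2*(n-m)+1).factorial : ℚ)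
        = (((2*n+1).choose (2*m) : ℚ) * bernoulli (2*m)) / (((2*n+1).factorial : ℚ)) := by
    intro m hm
    rw [Finset.mem_range] at hm
    have hle : 2*m ≤ 2*n+1 := by omega
    have hf := Nat.choose_mul_factorial_mul_factorial hle
    rw [show 2*n+1-2*m = 2*(n-m)+1 from by omega] at hf
    have hfq : (((2*n+1).choose (2*m) : ℚ)) * (((2*m).factorial : ℚ)) * (((2*(n-m)+1).factorial : ℚ))
        = (((2*n+1).factorial : ℚ)) := by exact_mod_cast congrArg (Nat.cast : ℕ → ℚ) hf
    have ha : (((2*m).factorial : ℚ)) ≠ 0 := Nat.cast_ne_zero.mpr (Nat.factorial_ne_zero _)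
    have hb : (((2*(n-m)+1).factorial : ℚ)) ≠ 0 := Nat.cast_ne_zero.mpr (Nat.factorial_ne_zero _)
    have hc : (((2*n+1).factorial : ℚ)) ≠ 0 := Nat.cast_ne_zero.mpr (Nat.factorial_ne_zero _)
    field_simp
    linear_combination (-bernoulli (2*m)) * hfq
  rw [Finset.sum_congr rfl key, ← Finset.sum_div, bchoose n hn]
  have hfs : (((2*n+1).factorial : ℚ)) = (2*(n:ℚ)+1) * (((2*n).factorial : ℚ)) := by
    rw [show (2*n+1) = (2*n)+1 from rfl, Nat.factorial_succ]
    push_cast; ring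
  rw [hfs]
  have h1 : (2*(n:ℚ)+1) ≠ 0 := by positivity
  have h2 : (((2*n).factorial : ℚ)) ≠ 0 := Nat.cast_ne_zero.mpr (Nat.factorial_ne_zero _)
  field_simp

noncomputable def S (p : ℕ) : ℚ :=
  ((∑ l ∈ Finset.range (p+1), E (p-l) / ((2*l).factorial : ℚ)) + E p) / 2

lemma Dsum_eq (n : ℕ) (hn : 1 ≤ n) :
    ∑ m ∈ Finset.range (n+1), ∑ l ∈ Finset.range (m+1),
        (E (m-l) / ((2*l).factorial : ℚ)) / ((2*(n-m)+1).factorial : ℚ)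
      = 1/((2*n).factorial : ℚ) := by
  have hswap := Finset.sum_Ico_Ico_comm 0 (n+1)
    (fun l m => (E (m-l) / ((2*l).factorial : ℚ)) / ((2*(n-m)+1).factorial : ℚ))
  simp_rw [Finset.range_eq_Ico]
  rw [← hswap]
  have inner : ∀ l ∈ Finset.Ico 0 (n+1),
      (∑ m ∈ Finset.Ico l (n+1), (E (m-l) / ((2*l).factorial : ℚ)) / ((2*(n-m)+1).factorial : ℚ))
        = if l = n then 1/((2*n).factorial : ℚ) else 0 := by
    intro l hl
    rw [Finset.mem_Ico] at hl
    have hln : l ≤ n := by omega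
    rw [Finset.sum_Ico_eq_sum_range]
    have hr : n + 1 - l = (n - l) + 1 := by omega
    rw [hr]
    have step : ∀ j ∈ Finset.range ((n-l)+1),
        (E (l+j-l) / ((2*l).factorial : ℚ)) / ((2*(n-(l+j))+1).factorial : ℚ)
          = (E j / ((2*((n-l)-j)+1).factorial : ℚ)) / ((2*l).factorial : ℚ) := by
      intro j hj
      rw [Finset.mem_range] at hj
      rw [show l+j-l = j from by omega, show n-(l+j) = (n-l)-j from by omega]
      ring
    rw [Finset.sum_congr rfl step, ← Finset.sum_div]
    rcases eq_or_lt_of_le hln with h | h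
    · subst h
      rw [if_pos rfl]
      simp [E_zero]
    · rw [if_neg (by omega), E_conv (n-l) (by omega), zero_div]
  rw [Finset.sum_congr rfl inner, Finset.sum_ite_eq' (Finset.Ico 0 (n+1)) n
    (fun _ => 1/((2*n).factorial : ℚ))]
  rw [if_pos (by simp)]

lemma S_conv (n : ℕ) (hn : 1 ≤ n) :
    ∑ m ∈ Finset.range (n+1), S m / ((2*(n-m)+1).factorial : ℚ)
      = 1/(2*((2*n).factorial : ℚ)) := by
  have expand : ∀ m ∈ Finset.range (n+1), S m / ((2*(n-m)+1).factorial : ℚ)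
      = (∑ l ∈ Finset.range (m+1),
            (E (m-l) / ((2*l).factorial : ℚ)) / ((2*(n-m)+1).factorial : ℚ)) / 2
        + (E m / ((2*(n-m)+1).factorial : ℚ)) / 2 := by
    intro m _
    have hh : (∑ l ∈ Finset.range (m+1),
          (E (m-l) / ((2*l).factorial : ℚ)) / ((2*(n-m)+1).factorial : ℚ))
        = (∑ l ∈ Finset.range (m+1), E (m-l) / ((2*l).factorial : ℚ))
            / ((2*(n-m)+1).factorial : ℚ) := (Finset.sum_div _ _ _).symm
    rw [hh, S]
    ring
  rw [Finset.sum_congr rfl expand, Finset.sum_add_distrib, ← Finset.sum_div, ← Finset.sum_div,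
    Dsum_eq n hn, E_conv n hn]
  have h2 : (((2*n).factorial : ℚ)) ≠ 0 := Nat.cast_ne_zero.mpr (Nat.factorial_ne_zero _)
  field_simp
  ring

lemma TS (p : ℕ) : bernoulli (2*p) / ((2*p).factorial : ℚ) = S p := by
  induction p using Nat.strong_induction_on with
  | _ p ih =>
    rcases Nat.eq_zero_or_pos p with rfl | hp
    · norm_num [S, E_zero]
    · have hb := bsum p hp
      have hs := S_conv p hp
      rw [Finset.sum_range_succ] at hb hs
      rw [show (2*(p-p)+1) = 1 from by omega, Nat.factorial_one] at hb hs
      have heq : ∑ m ∈ Finset.range p,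
            (bernoulli (2*m) / ((2*m).factorial : ℚ)) / ((2*(p-m)+1).factorial : ℚ)
          = ∑ m ∈ Finset.range p, S m / ((2*(p-m)+1).factorial : ℚ) := by
        refine Finset.sum_congr rfl fun m hm => ?_
        rw [ih m (Finset.mem_range.mp hm)]
      rw [heq] at hb
      norm_num at hb hs
      linarith

theorem bernoulli_even_eq_det_sum (p : ℕ) (hp : 1 ≤ p) :
    bernoulli (2 * p) =
      ((-1 : ℚ) ^ p * ((2 * p).factorial : ℚ) / 2) *
        ((∑ l ∈ Finset.range (p + 1),
            (-1 : ℚ) ^ l * D (p - l) / ((2 * l).factorial : ℚ)) + D p) := by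
  have hT := TS p
  have hfac : ((2*p).factorial : ℚ) ≠ 0 := Nat.cast_ne_zero.mpr (Nat.factorial_ne_zero _)
  have hb : bernoulli (2*p) = ((2*p).factorial : ℚ) * S p := by
    rw [← hT]; field_simp
  have hsum : ∑ l ∈ Finset.range (p+1), (-1:ℚ)^l * D (p-l) / ((2*l).factorial : ℚ)
      = (-1:ℚ)^p * ∑ l ∈ Finset.range (p+1), E (p-l) / ((2*l).factorial : ℚ) := by
    rw [Finset.mul_sum]
    refine Finset.sum_congr rfl fun l hl => ?_
    rw [Finset.mem_range] at hl
    have hsgn : (-1:ℚ)^p * (-1:ℚ)^(p-l) = (-1:ℚ)^l := by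
      rw [← pow_add, show p + (p-l) = 2*(p-l) + l from by omega, pow_add, pow_mul]
      norm_num
    unfold E
    linear_combination (-(D (p-l) / ((2*l).factorial : ℚ))) * hsgn
  have hpp : (-1:ℚ)^p * (-1:ℚ)^p = 1 := by
    rw [← pow_add, ← two_mul, pow_mul]; norm_num
  have hD : D p = (-1:ℚ)^p * E p := by
    unfold E
    rw [← mul_assoc, hpp, one_mul]
  rw [hb, S, hsum, hD]
  linear_combination (-(((2*p).factorial : ℚ)/2
    * ((∑ l ∈ Finset.range (p+1), E (p-l) / ((2*l).factorial : ℚ)) + E p))) * hpp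
end

section
/- For every integer p ≥ 1, the Bernoulli number B_{2p} satisfies B_{2p} = -2p + ((-1)^p (2p)!/2^{2p}) · Σ_{l=0}^{p} (-1)^l 3^{2l} D_{p-l}/(2l)!. -/
namespace BD

open PowerSeries Finset

noncomputable def c (n : ℕ) : ℚ := (2 - 4 ^ n) * bernoulli (2 * n) / (2 * n).factorial

lemma c_zero : c 0 = 1 := by norm_num [c]

noncomputable def E : ℚ⟦X⟧ := exp ℚ
noncomputable def E' : ℚ⟦X⟧ := rescale (-1) (exp ℚ)
noncomputable def B : ℚ⟦X⟧ := bernoulliPowerSeries ℚ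
noncomputable def W : ℚ⟦X⟧ := 2 * B - rescale 2 B
noncomputable def Sh : ℚ⟦X⟧ := PowerSeries.C (R := ℚ) (1/2) * (E - E')
noncomputable def Ch3 : ℚ⟦X⟧ :=
  PowerSeries.C (R := ℚ) (1/2) * (rescale 3 E + rescale (-3) E)

lemma hEE' : E * E' = 1 := by
  have := exp_mul_exp_eq_exp_add (1 : ℚ) (-1)
  simpa [E, E'] using this

lemma C2 : (PowerSeries.C (R := ℚ)) 2 = (2 : ℚ⟦X⟧) := map_ofNat _ 2

lemma half : (PowerSeries.C (R := ℚ) (1/2)) * 2 = 1 := by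
  rw [← C2, ← map_mul]; norm_num

lemma rescale_C (a r : ℚ) : rescale a (PowerSeries.C (R := ℚ) r) = PowerSeries.C (R := ℚ) r := by
  ext n
  cases n <;> simp [coeff_rescale, PowerSeries.coeff_C]

lemma hresc2 : rescale (2:ℚ) E = E ^ 2 := by
  rw [show ((2:ℚ)) = ((2:ℕ):ℚ) by norm_num, E, ← exp_pow_eq_rescale_exp]

lemma hresc3 : rescale (3:ℚ) E = E ^ 3 := by
  rw [show ((3:ℚ)) = ((3:ℕ):ℚ) by norm_num, E, ← exp_pow_eq_rescale_exp]

lemma hrescE' : rescale (-1:ℚ) E = E' := rfl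

lemma hrescn3 : rescale (-3:ℚ) E = E' ^ 3 := by
  have h : ((3:ℚ) * (-1)) = -3 := by norm_num
  rw [← h, ← rescale_rescale, hresc3, map_pow, hrescE']

lemma hB : B * (E - 1) = X := bernoulliPowerSeries_mul_exp_sub_one ℚ

lemma hB2 : rescale (2:ℚ) B * (E ^ 2 - 1) = 2 * X := by
  have := congrArg (rescale (2:ℚ)) hB
  rw [map_mul, map_sub, map_one, rescale_X, hresc2] at this
  rw [this, C2]

lemma two_ne : (2 : ℚ⟦X⟧) ≠ 0 := by
  intro h
  have := congrArg (constantCoeff (R := ℚ)) h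
  rw [map_ofNat, map_zero] at this
  norm_num at this

lemma hX2ne : (2 * X : ℚ⟦X⟧) ≠ 0 :=
  mul_ne_zero two_ne X_ne_zero

lemma hE21 : (E ^ 2 - 1 : ℚ⟦X⟧) ≠ 0 := by
  intro h
  apply hX2ne
  rw [← hB2, h, mul_zero]

lemma hEne : (E : ℚ⟦X⟧) ≠ 0 := by
  intro h
  have := congrArg (constantCoeff (R := ℚ)) h
  simp [E, constantCoeff_exp] at this

lemma hShE : Sh * E = PowerSeries.C (R := ℚ) (1/2) * (E ^ 2 - 1) := by
  rw [Sh]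
  linear_combination (-(PowerSeries.C (R := ℚ) (1/2))) * hEE'

lemma hW2 : W * (E ^ 2 - 1) = 2 * (X * E) := by
  rw [W]
  linear_combination (2 * (E + 1)) * hB - hB2

lemma K1 : W * Sh = X := by
  apply mul_right_cancel₀ hEne
  calc W * Sh * E = PowerSeries.C (R := ℚ) (1/2) * (W * (E ^ 2 - 1)) := by
        rw [mul_assoc, hShE]; ring
    _ = PowerSeries.C (R := ℚ) (1/2) * (2 * (X * E)) := by rw [hW2]
    _ = X * E := by linear_combination (X * E) * half

lemma hSh2 : rescale (2:ℚ) Sh = PowerSeries.C (R := ℚ) (1/2) * (E ^ 2 - E' ^ 2) := by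
  rw [Sh, map_mul, map_sub]
  have h3 : rescale (2:ℚ) E' = E' ^ 2 := by
    rw [← hrescE', rescale_rescale, show ((-1:ℚ) * 2) = (2:ℚ) * (-1) by ring,
      ← rescale_rescale, hresc2, map_pow, hrescE']
  rw [rescale_C, hresc2, h3]

lemma hCh3 : Ch3 = PowerSeries.C (R := ℚ) (1/2) * (E ^ 3 + E' ^ 3) := by
  rw [Ch3, hresc3, hrescn3]

lemma K2 : Ch3 * W = rescale 2 B + X + 2 * (X * rescale 2 Sh) := by
  apply mul_right_cancel₀ hE21
  calc Ch3 * W * (E ^ 2 - 1) = Ch3 * (2 * (X * E)) := by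
        rw [mul_assoc, hW2]
    _ = X * (E ^ 4 + E' ^ 2) := by
        rw [hCh3]
        linear_combination (X * E * (E ^ 3 + E' ^ 3)) * half + (X * E' ^ 2) * hEE'
  rw [hSh2]
  linear_combination -hB2 - (X * (E ^ 2 - E' ^ 2) * (E ^ 2 - 1)) * half
    + (X * (E * E' + 1)) * hEE'


lemma coeff_B (n : ℕ) : coeff (R := ℚ) n B = bernoulli n / n.factorial := by
  simp [B, bernoulliPowerSeries, coeff_mk]

lemma coeff_W (n : ℕ) : coeff (R := ℚ) n W = (2 - 2 ^ n) * bernoulli n / n.factorial := by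
  rw [W, map_sub, ← C2, coeff_C_mul, coeff_rescale, coeff_B]
  ring

lemma coeff_W_even (n : ℕ) : coeff (R := ℚ) (2 * n) W = c n := by
  rw [coeff_W, c, pow_mul]
  norm_num

lemma coeff_W_odd (n : ℕ) : coeff (R := ℚ) (2 * n + 1) W = 0 := by
  rw [coeff_W]
  rcases n with _ | n
  · norm_num
  · have hb : bernoulli (2 * (n + 1) + 1) = 0 := by
      rw [bernoulli_eq_bernoulli'_of_ne_one (by omega)]
      exact bernoulli'_eq_zero_of_odd ⟨n + 1, by ring⟩ (by omega)
    rw [hb]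
    ring

lemma coeff_E (n : ℕ) : coeff (R := ℚ) n E = 1 / n.factorial := by
  simp [E, coeff_exp]

lemma coeff_E' (n : ℕ) : coeff (R := ℚ) n E' = (-1) ^ n / n.factorial := by
  rw [E', coeff_rescale, coeff_exp]
  simp [div_eq_mul_inv]

lemma coeff_Sh (n : ℕ) : coeff (R := ℚ) n Sh = if Even n then (0:ℚ) else 1 / (n.factorial : ℚ) := by
  rw [Sh, coeff_C_mul, map_sub, coeff_E, coeff_E']
  rcases Nat.even_or_odd n with h | h
  · rw [if_pos h, h.neg_one_pow]
    ring
  · rw [if_neg (Nat.not_even_iff_odd.mpr h), h.neg_one_pow]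
    ring

lemma coeff_Ch3 (n : ℕ) : coeff (R := ℚ) n Ch3 = if Even n then (3:ℚ) ^ n / (n.factorial : ℚ) else 0 := by
  rw [Ch3, coeff_C_mul, map_add, coeff_rescale, coeff_rescale, coeff_E,
    show ((-3:ℚ)) = -3 from rfl]
  have : ((-3:ℚ)) ^ n = (-1) ^ n * 3 ^ n := by
    rw [show ((-3:ℚ)) = (-1) * 3 by norm_num, mul_pow]
  rw [this]
  rcases Nat.even_or_odd n with h | h
  · rw [if_pos h, h.neg_one_pow]
    ring
  · rw [if_neg (Nat.not_even_iff_odd.mpr h), h.neg_one_pow]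
    ring

lemma sum_two_mul (f : ℕ → ℚ) (n : ℕ) :
    ∑ i ∈ range (2 * n), f i = ∑ i ∈ range n, (f (2 * i) + f (2 * i + 1)) := by
  induction n with
  | zero => simp
  | succ n ih =>
    rw [show 2 * (n + 1) = 2 * n + 1 + 1 by ring, sum_range_succ, sum_range_succ,
      ih, sum_range_succ]
    ring

lemma conv (N : ℕ) :
    ∑ u ∈ range (N + 1), c u * (1 / ((2 * (N - u) + 1).factorial : ℚ)) =
      if N = 0 then 1 else 0 := by
  have h := congrArg (coeff (R := ℚ) (2 * N + 1)) K1
  rw [coeff_mul, Finset.Nat.sum_antidiagonal_eq_sum_range_succ_mk] at h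
  rw [Nat.succ_eq_add_one, show 2 * N + 1 + 1 = 2 * (N + 1) by ring,
    sum_two_mul, coeff_X] at h
  have hs : ∀ m ∈ range (N + 1),
      coeff (R := ℚ) (2 * m) W * coeff (R := ℚ) (2 * N + 1 - 2 * m) Sh +
        coeff (R := ℚ) (2 * m + 1) W * coeff (R := ℚ) (2 * N + 1 - (2 * m + 1)) Sh =
      c m * (1 / ((2 * (N - m) + 1).factorial : ℚ)) := by
    intro m hm
    rw [mem_range] at hm
    rw [coeff_W_odd, coeff_W_even, zero_mul, add_zero,
      show 2 * N + 1 - 2 * m = 2 * (N - m) + 1 by omega, coeff_Sh,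
      if_neg (by simp [Nat.even_add_one, parity_simps])]
  rw [sum_congr rfl hs] at h
  rw [h]
  by_cases h0 : N = 0 <;> simp [h0]

lemma conv' (N : ℕ) :
    ∑ u ∈ range (N + 1), (1 / ((2 * u + 1).factorial : ℚ)) * c (N - u) =
      if N = 0 then 1 else 0 := by
  rw [← conv N,
    ← Finset.sum_range_reflect (fun u => c u * (1 / ((2 * (N - u) + 1).factorial : ℚ))) (N + 1)]
  refine sum_congr rfl fun j hj => ?_
  rw [mem_range] at hj
  rw [show N + 1 - 1 - j = N - j by omega, show N - (N - j) = j by omega, mul_comm]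

lemma final (q : ℕ) :
    ∑ l ∈ range (q + 2), (3 : ℚ) ^ (2 * l) / ((2 * l).factorial : ℚ) * c (q + 1 - l) =
      4 ^ (q + 1) * bernoulli (2 * (q + 1)) / ((2 * (q + 1)).factorial : ℚ) +
        4 ^ (q + 1) / ((2 * q + 1).factorial : ℚ) := by
  have h := congrArg (coeff (R := ℚ) (2 * (q + 1))) K2
  rw [coeff_mul, Finset.Nat.sum_antidiagonal_eq_sum_range_succ_mk, sum_range_succ,
    sum_two_mul, Nat.sub_self] at h
  have hs : ∀ m ∈ range (q + 1),
      coeff (R := ℚ) (2 * m) Ch3 * coeff (R := ℚ) (2 * (q + 1) - 2 * m) W +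
        coeff (R := ℚ) (2 * m + 1) Ch3 * coeff (R := ℚ) (2 * (q + 1) - (2 * m + 1)) W =
      (3 : ℚ) ^ (2 * m) / ((2 * m).factorial : ℚ) * c (q + 1 - m) := by
    intro m hm
    rw [mem_range] at hm
    rw [coeff_Ch3, if_pos ⟨m, (two_mul m)⟩, coeff_Ch3,
      if_neg (by simp [Nat.even_add_one, parity_simps]), zero_mul, add_zero,
      show 2 * (q + 1) - 2 * m = 2 * (q + 1 - m) by omega, coeff_W_even]
  rw [sum_congr rfl hs] at h
  have h0W : coeff (R := ℚ) 0 W = c 0 := coeff_W_even 0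
  rw [h0W, coeff_Ch3, if_pos ⟨q + 1, (two_mul (q + 1))⟩] at h
  -- right-hand side of h
  rw [map_add, map_add, coeff_rescale, coeff_B, PowerSeries.coeff_X,
    if_neg (by omega), ← C2, coeff_C_mul] at h
  have hx : coeff (R := ℚ) (2 * (q + 1)) (X * rescale 2 Sh) = coeff (R := ℚ) (2 * q + 1) (rescale 2 Sh) := by
    rw [show 2 * (q + 1) = (2 * q + 1) + 1 by ring, coeff_succ_X_mul]
  rw [hx, coeff_rescale, coeff_Sh,
    if_neg (by simp [Nat.even_add_one, parity_simps])] at h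
  rw [show q + 2 = (q + 1) + 1 from rfl, sum_range_succ, Nat.sub_self, h,
    show ((2:ℚ) ^ (2 * (q + 1))) = 4 ^ (q + 1) by rw [pow_mul]; norm_num,
    show ((2:ℚ) ^ (2 * q + 1)) = 4 ^ (q + 1) / 2 by rw [pow_succ, pow_mul]; ring]
  ring

/-- entries of the Hessenberg matrix, as a function on `ℕ` -/
noncomputable def aN (i t : ℕ) : ℚ :=
  if i ≤ t then 1 / ((2 * (t - i) + 3).factorial : ℚ) else if t + 1 = i then 1 else 0

noncomputable def cmN (t j : ℕ) : ℚ := if t ≤ j then c (j - t) else 0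

noncomputable def pN (i j : ℕ) : ℚ :=
  if i = 0 then -c (j + 1) else if j + 1 = i then 1 else 0

lemma key_sum (k i j : ℕ) (hi : i ≤ k) (hj : j ≤ k) :
    ∑ t ∈ range (k + 1), aN i t * cmN t j = pN i j := by
  have hsub : ∑ t ∈ range (k + 1), aN i t * cmN t j = ∑ t ∈ range (j + 1), aN i t * cmN t j := by
    rw [eq_comm]
    apply Finset.sum_subset (by simp [Finset.range_subset]; omega)
    intro t ht hnt
    rw [mem_range] at ht; rw [mem_range] at hnt
    have : ¬ t ≤ j := by omega
    rw [cmN, if_neg this, mul_zero]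
  rcases Nat.eq_zero_or_pos i with h0 | h0
  · subst h0
    rw [hsub, pN, if_pos rfl]
    have h := conv' (j + 1)
    rw [if_neg (by omega), Finset.sum_range_succ'] at h
    have hs : ∀ u ∈ range (j + 1),
        (1 / (((2 * (u + 1) + 1).factorial : ℚ))) * c (j + 1 - (u + 1)) =
        aN 0 u * cmN u j := by
      intro u hu
      rw [mem_range] at hu
      rw [aN, if_pos (by omega), cmN, if_pos (by omega),
        show 2 * (u + 1) + 1 = 2 * (u - 0) + 3 by omega,
        show j + 1 - (u + 1) = j - u by omega]
    rw [sum_congr rfl hs] at h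
    have : (1 / (((2 * 0 + 1).factorial : ℚ))) * c (j + 1 - 0) = c (j + 1) := by
      norm_num
    rw [this] at h
    linarith
  · obtain ⟨i', rfl⟩ : ∃ i', i = i' + 1 := ⟨i - 1, by omega⟩
    rcases lt_trichotomy j i' with hlt | heq | hgt
    · -- j < i', everything vanishes
      rw [pN, if_neg (by omega), if_neg (by omega)]
      apply Finset.sum_eq_zero
      intro t ht
      by_cases htj : t ≤ j
      · rw [aN, if_neg (by omega), if_neg (by omega), zero_mul]
      · rw [cmN, if_neg htj, mul_zero]
    · -- j = i'
      subst heq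
      rw [pN, if_neg (by omega), if_pos rfl]
      rw [Finset.sum_eq_single j]
      · rw [aN, if_neg (by omega), if_pos rfl, cmN, if_pos le_rfl, Nat.sub_self, c_zero]
        norm_num
      · intro t ht htj
        rw [mem_range] at ht
        by_cases h2 : t ≤ j
        · rw [aN, if_neg (by omega), if_neg (by omega), zero_mul]
        · rw [cmN, if_neg h2, mul_zero]
      · intro habs
        exact absurd (by rw [mem_range]; omega) habs
    · -- i' < j, i.e. i'+1 ≤ j
      rw [pN, if_neg (by omega), if_neg (by omega), hsub]
      rw [show j + 1 = i' + (j + 1 - i') by omega] at hsub ⊢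
      have hz : ∑ t ∈ Finset.Ico 0 i', aN (i' + 1) t * cmN t j = 0 := by
        apply Finset.sum_eq_zero
        intro t ht
        rw [Finset.mem_Ico] at ht
        rw [aN, if_neg (by omega), if_neg (by omega), zero_mul]
      rw [Finset.range_eq_Ico, ← Finset.sum_Ico_consecutive _ (Nat.zero_le i') (by omega),
        hz, zero_add, Finset.sum_Ico_eq_sum_range]
      have hN : i' + (j + 1 - i') - i' = (j - i' - 1) + 1 + 1 := by omega
      rw [hN]
      have h := conv' (j - i')
      rw [if_neg (by omega)] at h
      rw [show j - i' = j - i' - 1 + 1 by omega] at h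
      rw [← h]
      apply sum_congr rfl
      intro u hu
      rw [mem_range] at hu
      rcases Nat.eq_zero_or_pos u with rfl | hu0
      · rw [add_zero, aN, if_neg (by omega), if_pos rfl, cmN, if_pos (by omega)]
        rw [show j - i' - 1 + 1 - 0 = j - i' by omega]
        norm_num
      · obtain ⟨v, rfl⟩ : ∃ v, u = v + 1 := ⟨u - 1, by omega⟩
        rw [aN, if_pos (by omega), cmN, if_pos (by omega),
          show i' + (v + 1) - (i' + 1) = v by omega,
          show 2 * v + 3 = 2 * (v + 1) + 1 by ring,
          show j - (i' + (v + 1)) = j - i' - 1 + 1 - (v + 1) by omega]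

lemma det_D (k : ℕ) : D (k + 1) = (-1 : ℚ) ^ (k + 1) * c (k + 1) := by
  have hD : D (k + 1) = (Matrix.of fun i j : Fin (k + 1) => aN i j).det := by
    rw [D]
    rfl
  set A := Matrix.of fun i j : Fin (k + 1) => aN (i : ℕ) (j : ℕ) with hA
  set Cm := Matrix.of fun i j : Fin (k + 1) => cmN (i : ℕ) (j : ℕ) with hCm
  set P := Matrix.of fun i j : Fin (k + 1) => pN (i : ℕ) (j : ℕ) with hP
  have hAC : A * Cm = P := by
    ext i j
    rw [Matrix.mul_apply]
    calc ∑ t : Fin (k + 1), A i t * Cm t j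
        = ∑ t ∈ range (k + 1), aN (i : ℕ) t * cmN t (j : ℕ) :=
          Fin.sum_univ_eq_sum_range (fun t => aN (i : ℕ) t * cmN t (j : ℕ)) (k + 1)
      _ = pN (i : ℕ) (j : ℕ) :=
          key_sum k i j (Nat.lt_succ_iff.mp i.isLt) (Nat.lt_succ_iff.mp j.isLt)
  have hdetC : Cm.det = 1 := by
    have ht : Cm.BlockTriangular id := by
      intro i j hij
      have : ¬ ((i : ℕ) ≤ (j : ℕ)) := by
        simp only [id] at hij
        exact not_le.mpr hij
      simp only [hCm, Matrix.of_apply, cmN, if_neg this]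
    rw [Matrix.det_of_upperTriangular ht]
    apply Finset.prod_eq_one
    intro i _
    simp only [hCm, Matrix.of_apply, cmN, if_pos le_rfl, Nat.sub_self, c_zero]
  have hlow : (P.submatrix (finRotate (k + 1)) id).BlockTriangular OrderDual.toDual := by
    intro i j hij
    have hij' : i < j := hij
    have hiv : (i : ℕ) < (j : ℕ) := hij'
    have hlast : i < Fin.last k := lt_of_lt_of_le hij' (Fin.le_last j)
    have hval : ((finRotate (k + 1)) i : ℕ) = (i : ℕ) + 1 := by
      rw [finRotate_succ_apply]
      exact Fin.val_add_one_of_lt hlast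
    simp only [Matrix.submatrix_apply, id, hP, Matrix.of_apply, pN, hval]
    rw [if_neg (by omega), if_neg (by omega)]
  have hdiag : ∏ i : Fin (k + 1), (P.submatrix (finRotate (k + 1)) id) i i = -c (k + 1) := by
    rw [Fin.prod_univ_castSucc]
    have h1 : ∀ i : Fin k,
        (P.submatrix (finRotate (k + 1)) id) i.castSucc i.castSucc = 1 := by
      intro i
      have hval : ((finRotate (k + 1)) i.castSucc : ℕ) = (i : ℕ) + 1 := by
        rw [finRotate_succ_apply]
        exact Fin.val_add_one_of_lt (Fin.castSucc_lt_last i)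
      simp only [Matrix.submatrix_apply, id, hP, Matrix.of_apply, pN, hval]
      rw [if_neg (by omega), if_pos (by simp)]
    have h2 : (P.submatrix (finRotate (k + 1)) id) (Fin.last k) (Fin.last k) = -c (k + 1) := by
      simp [Matrix.submatrix_apply, finRotate_last, hP, pN]
    rw [h2]
    rw [Finset.prod_congr rfl (fun i _ => h1 i), Finset.prod_const_one, one_mul]
  have e1 : -c (k + 1) = ((-1 : ℚ) ^ k) * P.det := by
    have := Matrix.det_permute (finRotate (k + 1)) P
    rw [Matrix.det_of_lowerTriangular _ hlow, hdiag] at this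
    rw [this, sign_finRotate]
    norm_num
  have h2 : ((-1 : ℚ) ^ k) * ((-1 : ℚ) ^ k) = 1 := by
    rw [← pow_add]
    exact Even.neg_one_pow ⟨k, rfl⟩
  have hPdet : P.det = (-1 : ℚ) ^ (k + 1) * c (k + 1) := by
    calc P.det = ((-1 : ℚ) ^ k * (-1 : ℚ) ^ k) * P.det := by rw [h2, one_mul]
      _ = (-1 : ℚ) ^ k * (-c (k + 1)) := by rw [mul_assoc, ← e1]
      _ = (-1 : ℚ) ^ (k + 1) * c (k + 1) := by ring
  have hdetA : A.det = P.det := by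
    calc A.det = A.det * Cm.det := by rw [hdetC, mul_one]
      _ = (A * Cm).det := (Matrix.det_mul A Cm).symm
      _ = P.det := by rw [hAC]
  rw [hD, hdetA, hPdet]

lemma D_eq (m : ℕ) : D m = (-1 : ℚ) ^ m * c m := by
  cases m with
  | zero => rw [D, c_zero]; norm_num
  | succ k => exact det_D k

end BD


open BD Finset in
theorem bernoulli_even_eq_det_sum' (p : ℕ) (hp : 1 ≤ p) :
    bernoulli (2 * p) =
      -(2 * (p : ℚ)) + ((-1 : ℚ) ^ p * ((2 * p).factorial : ℚ) / 2 ^ (2 * p)) *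
        ∑ l ∈ Finset.range (p + 1),
          (-1 : ℚ) ^ l * 3 ^ (2 * l) * D (p - l) / ((2 * l).factorial : ℚ) := by
  obtain ⟨q, rfl⟩ : ∃ q, p = q + 1 := ⟨p - 1, by omega⟩
  have hsum : ∑ l ∈ Finset.range (q + 2),
      (-1 : ℚ) ^ l * 3 ^ (2 * l) * D (q + 1 - l) / ((2 * l).factorial : ℚ)
      = (-1 : ℚ) ^ (q + 1) *
        ∑ l ∈ Finset.range (q + 2), (3 : ℚ) ^ (2 * l) / ((2 * l).factorial : ℚ) * c (q + 1 - l) := by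
    rw [mul_sum]
    apply sum_congr rfl
    intro l hl
    rw [mem_range] at hl
    rw [D_eq]
    have hl2 : (-1 : ℚ) ^ (q + 1 - l) * (-1 : ℚ) ^ l = (-1 : ℚ) ^ (q + 1) := by
      rw [← pow_add, show q + 1 - l + l = q + 1 by omega]
    linear_combination ((3 : ℚ) ^ (2 * l) * c (q + 1 - l) / ((2 * l).factorial : ℚ)) * hl2
  rw [show q + 1 + 1 = q + 2 from rfl] at *
  rw [hsum, final q]
  have hfac : ((2 * (q + 1)).factorial : ℚ) = (2 * (q + 1)) * ((2 * q + 1).factorial : ℚ) := by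
    rw [show 2 * (q + 1) = (2 * q + 1) + 1 by ring, Nat.factorial_succ]
    push_cast
    ring
  have h2pow : ((2 : ℚ) ^ (2 * (q + 1))) = 4 ^ (q + 1) := by
    rw [pow_mul]; norm_num
  have hsq : ((-1 : ℚ) ^ (q + 1)) * ((-1 : ℚ) ^ (q + 1)) = 1 := by
    rw [← pow_add]
    exact Even.neg_one_pow ⟨q + 1, rfl⟩
  have hne2 : ((2 * q + 1).factorial : ℚ) ≠ 0 := Nat.cast_ne_zero.mpr (Nat.factorial_ne_zero _)
  have hne4 : ((4 : ℚ) ^ (q + 1)) ≠ 0 := pow_ne_zero _ (by norm_num)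
  set B := bernoulli (2 * (q + 1)) with hB
  set F := ((2 * q + 1).factorial : ℚ) with hF
  obtain ⟨u, hu⟩ : ∃ u : ℚ, (-1 : ℚ) ^ (q + 1) = u := ⟨_, rfl⟩
  rw [hu] at hsq ⊢
  rw [h2pow, hfac]
  push_cast
  field_simp
  linear_combination (-(2 * ((q:ℚ) + 1) * F * (4 ^ (q + 1) * B * F +
    4 ^ (q + 1) * (2 * ((q:ℚ) + 1) * F)))) * hsq
    + (8 * B * q * F ^ 2 * 4 ^ q + 8 * B * F ^ 2 * 4 ^ q + 32 * q * F ^ 2 * 4 ^ q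
      + 16 * q ^ 2 * F ^ 2 * 4 ^ q + 16 * F ^ 2 * 4 ^ q - B - 2 * q - 2) * hsq
end

section
/- For every real number z with 0 < |z| < π, the series Σ_{p=0}^{∞} (-1)^p (B_{2p}/(2p)!) z^{2p} converges and its sum equals (z/2) · cos(z/2) / sin(z/2). -/
open PowerSeries Finset

lemma key_ps : (rescale (2:ℚ) (bernoulliPowerSeries ℚ)) * (exp ℚ + 1) = 2 * bernoulliPowerSeries ℚ := by
  have hE : (exp ℚ - 1) ≠ 0 := by
    intro h
    have := congrArg (coeff 1) h
    simp [coeff_exp] at this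
  apply mul_right_cancel₀ hE
  have h1 : bernoulliPowerSeries ℚ * (exp ℚ - 1) = X := bernoulliPowerSeries_mul_exp_sub_one ℚ
  have h2 : rescale (2:ℚ) (bernoulliPowerSeries ℚ) * (rescale (2:ℚ) (exp ℚ) - 1) = rescale (2:ℚ) X := by
    rw [← h1, map_mul, map_sub, map_one]
  have h3 : rescale (2:ℚ) (exp ℚ) = exp ℚ ^ 2 := by
    rw [exp_pow_eq_rescale_exp]
    norm_num
  calc rescale (2:ℚ) (bernoulliPowerSeries ℚ) * (exp ℚ + 1) * (exp ℚ - 1)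
      = rescale (2:ℚ) (bernoulliPowerSeries ℚ) * (rescale (2:ℚ) (exp ℚ) - 1) := by
        rw [h3]; ring
    _ = rescale (2:ℚ) X := h2
    _ = 2 * X := by rw [rescale_X, map_ofNat]
    _ = 2 * bernoulliPowerSeries ℚ * (exp ℚ - 1) := by rw [mul_assoc, h1]

lemma sum_choose_two_pow_bernoulli (m : ℕ) :
    ∑ k ∈ range (m+1), (m.choose k : ℚ) * 2^k * bernoulli k = (2 - 2^m) * bernoulli m := by
  have h := congrArg (coeff m) key_ps
  rw [two_mul] at h
  simp only [coeff_mul, coeff_rescale, bernoulliPowerSeries, coeff_mk, map_add, coeff_exp,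
    coeff_one, Nat.sum_antidiagonal_eq_sum_range_succ_mk, map_add] at h
  rw [Finset.sum_range_succ] at h
  simp only [Nat.sub_self, Nat.factorial_zero, Nat.cast_one, if_pos rfl] at h
  simp only [Algebra.algebraMap_self, RingHom.id_apply] at h
  have hfac : (m.factorial : ℚ) ≠ 0 := Nat.cast_ne_zero.mpr m.factorial_ne_zero
  have hsum : ∀ x ∈ range m, 2 ^ x * (bernoulli x / x.factorial) *
      ((1:ℚ) / (m - x).factorial + if m - x = 0 then 1 else 0)
      = 2 ^ x * (bernoulli x / x.factorial) * (1 / (m - x).factorial) := by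
    intro x hx
    rw [if_neg, add_zero]
    have := Finset.mem_range.mp hx
    omega
  rw [Finset.sum_congr rfl hsum] at h
  rw [Finset.sum_range_succ, Nat.choose_self]
  have key2 : ∑ k ∈ range m, (m.choose k : ℚ) * 2^k * bernoulli k
      = m.factorial * ∑ x ∈ range m, 2 ^ x * (bernoulli x / x.factorial) * (1 / (m - x).factorial) := by
    rw [Finset.mul_sum]
    refine Finset.sum_congr rfl fun k hk => ?_
    have hk' : k ≤ m := le_of_lt (Finset.mem_range.mp hk)
    rw [Nat.cast_choose ℚ hk']
    have h1 : (k.factorial:ℚ) ≠ 0 := Nat.cast_ne_zero.mpr k.factorial_ne_zero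
    have h2 : ((m-k).factorial:ℚ) ≠ 0 := Nat.cast_ne_zero.mpr (m-k).factorial_ne_zero
    field_simp
  have h' : ∑ x ∈ range m, 2 ^ x * (bernoulli x / x.factorial) * ((1:ℚ) / (m - x).factorial)
      = 2 * (bernoulli m / m.factorial) - 2^m * (bernoulli m / m.factorial) * 2 := by
    simp only [if_true, one_div_one] at h
    linarith
  rw [key2, h']
  field_simp
  ring

lemma sum_range_even_odd {M : Type*} [AddCommMonoid M] (f : ℕ → M) (N : ℕ) :
    ∑ k ∈ range (2*N), f k = ∑ p ∈ range N, f (2*p) + ∑ p ∈ range N, f (2*p+1) := by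
  induction N with
  | zero => simp
  | succ n ih =>
    rw [show 2*(n+1) = 2*n+1+1 by ring, Finset.sum_range_succ, Finset.sum_range_succ, ih,
      Finset.sum_range_succ, Finset.sum_range_succ]
    abel

lemma bernoulli_odd_zero {m : ℕ} (h : Odd m) (h1 : 1 < m) : bernoulli m = 0 := by
  rw [bernoulli_eq_bernoulli'_of_ne_one (by omega), bernoulli'_eq_zero_of_odd h h1]

lemma bern_sum_even (n : ℕ) :
    ∑ p ∈ range (n+1), ((2*n+1).choose (2*p) : ℚ) * 4^p * bernoulli (2*p) = 2*n+1 := by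
  have hJ := sum_choose_two_pow_bernoulli (2*n+1)
  rw [show 2*n+1+1 = 2*(n+1) by ring, sum_range_even_odd] at hJ
  have hodd : ∑ p ∈ range (n+1), ((2*n+1).choose (2*p+1) : ℚ) * 2^(2*p+1) * bernoulli (2*p+1)
      = -(2*n+1) := by
    rw [Finset.sum_eq_single 0]
    · simp [Nat.choose_one_right, bernoulli_one]
      ring
    · intro p hp hp0
      rw [bernoulli_odd_zero ⟨p, by ring⟩ (by omega), mul_zero]
    · intro h; exact absurd (Finset.mem_range.mpr (Nat.succ_pos n)) h
  have hrhs : ((2:ℚ) - 2^(2*n+1)) * bernoulli (2*n+1) = 0 := by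
    rcases Nat.eq_zero_or_pos n with rfl | hn
    · norm_num [bernoulli_one]
    · rw [bernoulli_odd_zero ⟨n, by ring⟩ (by omega), mul_zero]
  rw [hrhs, hodd] at hJ
  have := hJ
  rw [show ∀ x:ℚ, x + -(2*↑n+1) = 0 ↔ x = 2*↑n+1 from fun x => by constructor <;> intro h <;> linarith] at this
  rw [← this]
  refine Finset.sum_congr rfl fun p hp => ?_
  rw [pow_mul]
  norm_num

lemma rat_coeff (n : ℕ) :
    ∑ p ∈ range (n+1),
      (4:ℚ)^p * bernoulli (2*p) / ((2*p).factorial * (2*(n-p)+1).factorial)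
      = 1 / (2*n).factorial := by
  have h := bern_sum_even n
  have hterm : ∀ p ∈ range (n+1), ((2*n+1).choose (2*p) : ℚ) * 4^p * bernoulli (2*p)
      = ((2*n+1).factorial : ℚ) *
        ((4:ℚ)^p * bernoulli (2*p) / ((2*p).factorial * (2*(n-p)+1).factorial)) := by
    intro p hp
    have hpn := Finset.mem_range.mp hp
    have hple : 2*p ≤ 2*n+1 := by omega
    rw [Nat.cast_choose ℚ hple, show 2*n+1 - 2*p = 2*(n-p)+1 by omega]
    have h1 : ((2*p).factorial:ℚ) ≠ 0 := Nat.cast_ne_zero.mpr (Nat.factorial_ne_zero _)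
    have h2 : ((2*(n-p)+1).factorial:ℚ) ≠ 0 := Nat.cast_ne_zero.mpr (Nat.factorial_ne_zero _)
    field_simp
  rw [Finset.sum_congr rfl hterm, ← Finset.mul_sum] at h
  have hfac : ((2*n+1).factorial : ℚ) = (2*(n:ℚ)+1) * ((2*n).factorial : ℚ) := by
    rw [show (2*n+1) = (2*n)+1 from rfl, Nat.factorial_succ]
    push_cast
    ring
  rw [hfac] at h
  have h2 : ((2*n).factorial : ℚ) ≠ 0 := Nat.cast_ne_zero.mpr (Nat.factorial_ne_zero _)
  have hn1 : (2*(n:ℚ)+1) ≠ 0 := by positivity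
  rw [eq_div_iff h2]
  apply mul_left_cancel₀ hn1
  rw [mul_one]
  linear_combination h

lemma real_coeff (n : ℕ) :
    ∑ p ∈ range (n+1),
      (4:ℝ)^p * ((bernoulli (2*p) : ℚ):ℝ) / (((2*p).factorial : ℝ) * ((2*(n-p)+1).factorial : ℝ))
      = 1 / ((2*n).factorial : ℝ) := by
  have h := congrArg (Rat.cast : ℚ → ℝ) (rat_coeff n)
  push_cast at h
  exact h
open Finset Real

-- summability of the Bernoulli series
lemma summable_norm_bern (z : ℝ) (hπ : |z| < Real.pi) :
    Summable (fun p : ℕ => ‖(-1 : ℝ) ^ p * ((bernoulli (2 * p) : ℚ) : ℝ) /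
      ((2 * p).factorial : ℝ) * z ^ (2 * p)‖) := by
  have hπ0 : (0:ℝ) < π := Real.pi_pos
  set r : ℝ := z^2 / (4 * π^2) with hr_def
  have hr0 : 0 ≤ r := by positivity
  have hr1 : r < 1 := by
    rw [div_lt_one (by positivity)]
    have : z^2 = |z|^2 := (sq_abs z).symm
    nlinarith [abs_nonneg z]
  have hgeo : Summable (fun p : ℕ => (π^2/3) * r^p) :=
    (summable_geometric_of_lt_one hr0 hr1).mul_left _
  refine Summable.of_nonneg_of_le (fun p => norm_nonneg _) (fun p => ?_) hgeo
  rcases Nat.eq_zero_or_pos p with rfl | hp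
  · have h1 : ‖(-1 : ℝ) ^ 0 * ((bernoulli (2*0) : ℚ) : ℝ) / (((2*0).factorial : ℕ) : ℝ)
        * z ^ (2*0)‖ = 1 := by norm_num
    rw [h1, pow_zero, mul_one]
    nlinarith [Real.pi_gt_three]
  · have hzp := hasSum_zeta_nat (Nat.pos_iff_ne_zero.mp hp)
    set S : ℝ := (-1 : ℝ) ^ (p + 1) * (2 : ℝ) ^ (2 * p - 1) * π ^ (2 * p) *
      ((bernoulli (2 * p) : ℚ) : ℝ) / ((2 * p).factorial : ℝ) with hS_def
    have hS_nonneg : 0 ≤ S := hzp.nonneg (fun n => by positivity)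
    have hS_le : S ≤ π^2/6 := by
      refine hasSum_le (fun n => ?_) hzp hasSum_zeta_two
      rcases Nat.eq_zero_or_pos n with rfl | hn
      · simp [zero_pow (by omega : 2*p ≠ 0)]
      · have h1 : (1:ℝ) ≤ (n:ℝ) := by exact_mod_cast hn
        have h2 : (n:ℝ)^2 ≤ (n:ℝ)^(2*p) := pow_le_pow_right₀ h1 (by omega)
        exact one_div_le_one_div_of_le (by positivity) h2
    have h4 : (0:ℝ) < 2^(2*p-1) * π^(2*p) := by positivity
    have hBabs : |((bernoulli (2*p):ℚ):ℝ)| / (((2*p).factorial : ℕ):ℝ)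
        = S / (2^(2*p-1) * π^(2*p)) := by
      have habs : |S| = 2^(2*p-1) * π^(2*p) * |((bernoulli (2*p):ℚ):ℝ)|
          / (((2*p).factorial : ℕ):ℝ) := by
        rw [hS_def, abs_div, abs_mul, abs_mul, abs_mul, abs_pow, abs_pow, abs_pow, abs_neg,
          abs_one, one_pow, one_mul, abs_of_pos Real.pi_pos,
          abs_of_pos (by norm_num : (0:ℝ) < 2), Nat.abs_cast]
      rw [abs_of_nonneg hS_nonneg] at habs
      rw [habs]
      field_simp
    have hnorm : ‖(-1 : ℝ) ^ p * ((bernoulli (2 * p) : ℚ) : ℝ) /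
        (((2 * p).factorial : ℕ) : ℝ) * z ^ (2 * p)‖
        = |((bernoulli (2*p):ℚ):ℝ)| / (((2*p).factorial : ℕ):ℝ) * |z|^(2*p) := by
      rw [Real.norm_eq_abs, abs_mul, abs_div, abs_mul, abs_pow, abs_pow, abs_neg, abs_one,
        one_pow, one_mul, Nat.abs_cast]
    rw [hnorm, hBabs]
    have hmono : S / (2^(2*p-1) * π^(2*p)) * |z|^(2*p)
        ≤ (π^2/6) / (2^(2*p-1) * π^(2*p)) * |z|^(2*p) := by
      exact mul_le_mul_of_nonneg_right ((div_le_div_iff_of_pos_right h4).mpr hS_le) (by positivity)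
    refine le_trans hmono (le_of_eq ?_)
    have hpow : (2:ℝ)^(2*p-1) * 2 = 4^p := by
      rw [← pow_succ, show 2*p-1+1=2*p by omega, pow_mul]
      norm_num
    have hz2 : |z|^(2*p) = (z^2)^p := by rw [pow_mul, sq_abs]
    have hπp : π^(2*p) = (π^2)^p := pow_mul π 2 p
    rw [hr_def, div_pow, mul_pow, hz2, hπp, ← hpow]
    field_simp
    ring

theorem hasSum_bernoulli_even (z : ℝ) (h0 : 0 < |z|) (hπ : |z| < Real.pi) :
    HasSum
      (fun p : ℕ =>
        (-1 : ℝ) ^ p * ((bernoulli (2 * p) : ℚ) : ℝ) / ((2 * p).factorial : ℝ) * z ^ (2 * p))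
      ((z / 2) * Real.cos (z / 2) / Real.sin (z / 2)) := by
  set a : ℕ → ℝ := fun p =>
    (-1 : ℝ) ^ p * ((bernoulli (2 * p) : ℚ) : ℝ) / ((2 * p).factorial : ℝ) * z ^ (2 * p) with ha
  set b : ℕ → ℝ := fun q => (-1 : ℝ) ^ q * (z/2) ^ (2*q+1) / ((2*q+1).factorial : ℝ) with hb
  have hAnorm : Summable (fun p => ‖a p‖) := summable_norm_bern z hπ
  have hA : Summable a := hAnorm.of_norm
  have hBnorm : Summable (fun q => ‖b q‖) := by
    have hg : Summable (fun n : ℕ => |z/2|^n / (n.factorial : ℝ)) :=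
      Real.summable_pow_div_factorial _
    have hcomp : Summable (fun q : ℕ => |z/2|^(2*q+1) / ((2*q+1).factorial : ℝ)) :=
      hg.comp_injective (fun x y hxy => by omega)
    refine hcomp.congr (fun q => ?_)
    simp only [hb, Real.norm_eq_abs, abs_div, abs_mul, abs_pow, abs_neg, abs_one, one_pow,
      one_mul, Nat.abs_cast]
  have hsin : HasSum b (Real.sin (z/2)) := Real.hasSum_sin (z/2)
  have hcos : HasSum (fun n : ℕ => (z/2) * ((-1 : ℝ)^n * (z/2)^(2*n) / ((2*n).factorial : ℝ)))
      ((z/2) * Real.cos (z/2)) := (Real.hasSum_cos (z/2)).mul_left _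
  have hco : (fun n : ℕ => ∑ kl ∈ Finset.HasAntidiagonal.antidiagonal n, a kl.1 * b kl.2)
      = fun n : ℕ => (z/2) * ((-1 : ℝ)^n * (z/2)^(2*n) / ((2*n).factorial : ℝ)) := by
    funext n
    rw [Finset.Nat.sum_antidiagonal_eq_sum_range_succ_mk]
    have hterm : ∀ p ∈ range (n+1), a p * b (n - p)
        = ((-1 : ℝ)^n * (z/2)^(2*n+1)) *
          ((4:ℝ)^p * ((bernoulli (2*p):ℚ):ℝ) /
            (((2*p).factorial : ℕ):ℝ) / (((2*(n-p)+1).factorial : ℕ):ℝ)) := by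
      intro p hp
      have hpn : p ≤ n := by have := Finset.mem_range.mp hp; omega
      have h2 : z ^ (2*p) = (z/2)^(2*p) * 4^p := by
        rw [div_pow, show (4:ℝ)^p = 2^(2*p) by rw [pow_mul]; norm_num]
        field_simp
      rw [ha, hb]
      simp only
      rw [h2, show (-1:ℝ)^n = (-1)^p * (-1)^(n-p) by rw [← pow_add]; congr 1; omega,
        show (z/2)^(2*n+1) = (z/2)^(2*p) * (z/2)^(2*(n-p)+1) by rw [← pow_add]; congr 1; omega]
      ring
    rw [Finset.sum_congr rfl hterm, ← Finset.mul_sum]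
    have : ∑ p ∈ range (n+1), (4:ℝ)^p * ((bernoulli (2*p):ℚ):ℝ) /
        (((2*p).factorial : ℕ):ℝ) / (((2*(n-p)+1).factorial : ℕ):ℝ)
        = 1 / (((2*n).factorial : ℕ):ℝ) := by
      rw [← real_coeff n]
      exact Finset.sum_congr rfl (fun p hp => by rw [div_div])
    rw [this]
    ring
  have hprod : (∑' p, a p) * Real.sin (z/2) = (z/2) * Real.cos (z/2) := by
    rw [← hsin.tsum_eq, tsum_mul_tsum_eq_tsum_sum_antidiagonal_of_summable_norm hAnorm hBnorm,
      hco, hcos.tsum_eq]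
  have hsin0 : Real.sin (z/2) ≠ 0 := by
    rcases abs_lt.mp hπ with ⟨hl, hr⟩
    have hz : z ≠ 0 := fun hz => by simp [hz] at h0
    rcases lt_or_gt_of_ne hz with hzneg | hzpos
    · have : Real.sin (z/2) < 0 := by
        rw [show z/2 = -(-z/2) by ring, Real.sin_neg, neg_lt_zero]
        apply Real.sin_pos_of_pos_of_lt_pi (by linarith)
        linarith [Real.pi_pos]
      exact this.ne
    · have : 0 < Real.sin (z/2) := by
        apply Real.sin_pos_of_pos_of_lt_pi (by linarith)
        linarith [Real.pi_pos]
      exact this.ne'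
  have : (∑' p, a p) = (z / 2) * Real.cos (z / 2) / Real.sin (z / 2) := by
    field_simp [hsin0] at hprod ⊢
    linarith [hprod]
  rw [← this]
  exact hA.hasSum
end
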